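/- There is no graph H such that for every n ≥ 3 the star K_{1,n} admits a proper H-representation. Equivalently: for every fixed finite multigraph H there exists n such that K_{1,n} is not a proper H-graph. (A sufficient reason: in a proper representation no set contains another, so the center's representative and each leaf's representative must mutually overlap without containment; the leaf representatives are pairwise disjoint connected sets each meeting the boundary structure of the center's representative, and the number of such pairwise disjoint sets overlapping but not contained in a fixed connected subset of a subdivision of H is bounded by a function of H.) -/

import Mathlib

/-- A multigraph: a type of vertices `α`, a type of edges `ε`, and two endpoint
maps (parallel edges and self-loops are allowed). -/
structure Multigraph (α ε : Type*) where
  fst : ε → α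
  snd : ε → α

/-- The internal (subdivision) vertices of an edge path: drop the two endpoints. -/
def internalOf {β : Type*} (l : List β) : List β := (l.drop 1).dropLast

/-- Witness that the simple graph `H'` is a subdivision of the multigraph `H`:
each edge `e` of `H` is replaced by a path `path e` in `H'` between the images of
its endpoints, the paths are internally disjoint from each other and from the
branch vertices, the edges of `H'` are exactly the consecutive pairs on the
paths, and every vertex of `H'` is a branch vertex or lies on a path. -/
structure SubdivData {α ε β : Type*} (H : Multigraph α ε) (H' : SimpleGraph β) where
  φ : α → β
  inj : Function.Injective φ
  path : ε → List β
  head_eq : ∀ e, (path e).head? = some (φ (H.fst e))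
  last_eq : ∀ e, (path e).getLast? = some (φ (H.snd e))
  chain : ∀ e, (path e).Chain' H'.Adj
  nodup_internal : ∀ e, (internalOf (path e)).Nodup
  internal_not_branch : ∀ e a, φ a ∉ internalOf (path e)
  internal_disj : ∀ e e', e ≠ e' → ∀ b ∈ internalOf (path e), b ∉ internalOf (path e')
  adj_iff : ∀ x y, H'.Adj x y ↔ ∃ e n,
    ((path e)[n]? = some x ∧ (path e)[n + 1]? = some y) ∨
    ((path e)[n]? = some y ∧ (path e)[n + 1]? = some x)
  cover : ∀ b, (∃ a, φ a = b) ∨ ∃ e, b ∈ path e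

/-- A vertex subset is connected if it induces a connected subgraph
(the empty set counts as connected). -/
def ConnSub {β : Type*} (G : SimpleGraph β) (S : Set β) : Prop :=
  S.Nonempty → (G.induce S).Connected

/-- `G` is a proper `H`-graph: `G` is the intersection graph of a family of
nonempty connected vertex subsets of a subdivision `H'` of `H` in which no set
properly contains another. -/
def IsProperHGraph {α ε W : Type*} (H : Multigraph α ε) (G : SimpleGraph W) : Prop :=
  ∃ (N : ℕ) (H' : SimpleGraph (Fin N)) (_ : SubdivData H H') (S : W → Set (Fin N)),
    (∀ w, (S w).Nonempty ∧ ConnSub H' (S w)) ∧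
    (∀ u v : W, u ≠ v → (G.Adj u v ↔ (S u ∩ S v).Nonempty)) ∧
    (∀ u v : W, ¬ S u ⊂ S v)

/-- The star `K_{1,n}`: center `0` adjacent to the `n` leaves. -/
def starG (n : ℕ) : SimpleGraph (Fin (n + 1)) :=
  SimpleGraph.fromRel (fun u v => u = 0 ∧ v ≠ 0)

section StarProof

variable {α ε β : Type*} {H : Multigraph α ε} {H' : SimpleGraph β}

section Helpers

variable {γ : Type*} {G : SimpleGraph γ}

lemma reach_closed (P : γ → Prop) (h : ∀ u v, G.Adj u v → P u → P v)
    {u v : γ} (r : G.Reachable u v) : P u → P v := by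
  obtain ⟨w⟩ := r
  induction w with
  | nil => exact id
  | cons adj _ ih => exact fun hu => ih (h _ _ adj hu)

lemma exists_crossing {C : Set γ} {u v : γ} (r : G.Reachable u v) (hv : v ∉ C) :
    u ∈ C → ∃ x y, x ∈ C ∧ y ∉ C ∧ G.Adj x y := by
  classical
  obtain ⟨w⟩ := r
  induction w with
  | nil => exact fun hu => absurd hu hv
  | @cons a b c adj w ih =>
    intro hu
    by_cases h2 : b ∈ C
    · exact ih hv h2
    · exact ⟨a, b, hu, h2, adj⟩

lemma three_sorted {k1 k2 k3 : ℕ} (h12 : k1 ≠ k2) (h13 : k1 ≠ k3) (h23 : k2 ≠ k3)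
    (P : ℕ → Prop) (p1 : P k1) (p2 : P k2) (p3 : P k3) :
    ∃ a b c, a < b ∧ b < c ∧ P a ∧ P b ∧ P c := by
  rcases Nat.lt_trichotomy k1 k2 with h | h | h
  · rcases Nat.lt_trichotomy k2 k3 with h' | h' | h'
    · exact ⟨k1, k2, k3, h, h', p1, p2, p3⟩
    · exact absurd h' h23
    · rcases Nat.lt_trichotomy k1 k3 with h'' | h'' | h''
      · exact ⟨k1, k3, k2, h'', h', p1, p3, p2⟩
      · exact absurd h'' h13
      · exact ⟨k3, k1, k2, h'', h, p3, p1, p2⟩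
  · exact absurd h h12
  · rcases Nat.lt_trichotomy k1 k3 with h' | h' | h'
    · exact ⟨k2, k1, k3, h, h', p2, p1, p3⟩
    · exact absurd h' h13
    · rcases Nat.lt_trichotomy k2 k3 with h'' | h'' | h''
      · exact ⟨k2, k3, k1, h'', h', p2, p3, p1⟩
      · exact absurd h'' h23
      · exact ⟨k3, k2, k1, h'', h, p3, p2, p1⟩

lemma some_lt {β : Type*} {l : List β} {m : ℕ} {v : β} (h : l[m]? = some v) :
    m < l.length := by
  by_contra hh
  rw [List.getElem?_eq_none (Nat.le_of_not_lt hh)] at h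
  cases h

lemma internal_getElem? {β : Type*} (l : List β) (j : ℕ) :
    (internalOf l)[j]? = if j + 2 < l.length then l[j + 1]? else none := by
  unfold internalOf
  rw [List.getElem?_dropLast, List.length_drop]
  split_ifs with h1 h2 h2
  · rw [List.getElem?_drop]; congr 1; omega
  · omega
  · omega
  · rfl

lemma mem_internal_iff {β : Type*} {l : List β} {v : β} :
    v ∈ internalOf l ↔ ∃ k, 1 ≤ k ∧ k + 1 < l.length ∧ l[k]? = some v := by
  rw [List.mem_iff_getElem?]
  constructor
  · rintro ⟨j, hj⟩
    rw [internal_getElem?] at hj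
    by_cases h : j + 2 < l.length
    · rw [if_pos h] at hj
      exact ⟨j + 1, by omega, by omega, hj⟩
    · rw [if_neg h] at hj; cases hj
  · rintro ⟨k, hk1, hk2, hk⟩
    refine ⟨k - 1, ?_⟩
    rw [internal_getElem?, if_pos (by omega), show k - 1 + 1 = k from by omega]
    exact hk

end Helpers

variable (D : SubdivData H H') (C : Set β)

lemma end_branch (e : ε) {m : ℕ} {v : β} (hm : (D.path e)[m]? = some v)
    (h : m = 0 ∨ m = (D.path e).length - 1) : ∃ a, D.φ a = v := by
  rcases h with rfl | rfl
  · have h0 := D.head_eq e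
    rw [List.head?_eq_getElem?, hm] at h0
    exact ⟨H.fst e, (Option.some_inj.mp h0).symm⟩
  · have h0 := D.last_eq e
    rw [List.getLast?_eq_getElem?, hm] at h0
    exact ⟨H.snd e, (Option.some_inj.mp h0).symm⟩

lemma pos_unique (e : ε) {k : ℕ} {v : β} (hk1 : 1 ≤ k) (hk2 : k + 1 < (D.path e).length)
    (hv : (D.path e)[k]? = some v) :
    ∀ e' m, (D.path e')[m]? = some v → e' = e ∧ m = k := by
  intro e' m hm
  have hvmem : v ∈ internalOf (D.path e) := mem_internal_iff.mpr ⟨k, hk1, hk2, hv⟩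
  have hmlt : m < (D.path e').length := some_lt hm
  have hm0 : m ≠ 0 := by
    rintro rfl
    obtain ⟨a, ha⟩ := end_branch D e' hm (Or.inl rfl)
    exact D.internal_not_branch e a (ha ▸ hvmem)
  have hmL : m ≠ (D.path e').length - 1 := by
    intro h
    obtain ⟨a, ha⟩ := end_branch D e' hm (Or.inr h)
    exact D.internal_not_branch e a (ha ▸ hvmem)
  have hm2 : m + 1 < (D.path e').length := by omega
  have hvm' : v ∈ internalOf (D.path e') := mem_internal_iff.mpr ⟨m, by omega, hm2, hm⟩
  have he : e' = e := by
    by_contra hne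
    exact D.internal_disj e' e hne v hvm' hvmem
  subst he
  have h1 : (internalOf (D.path e'))[k - 1]? = some v := by
    rw [internal_getElem?, if_pos (by omega), show k - 1 + 1 = k from by omega]
    exact hv
  have h2 : (internalOf (D.path e'))[m - 1]? = some v := by
    rw [internal_getElem?, if_pos (by omega), show m - 1 + 1 = m from by omega]
    exact hm
  have := (List.getElem?_inj (some_lt h2) (D.nodup_internal e')).mp (h2.trans h1.symm)
  exact ⟨rfl, by omega⟩

lemma neighbors_of_internal (e : ε) {k : ℕ} {v u : β} (hk1 : 1 ≤ k)
    (hk2 : k + 1 < (D.path e).length) (hv : (D.path e)[k]? = some v)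
    (hadj : H'.Adj u v) :
    (D.path e)[k - 1]? = some u ∨ (D.path e)[k + 1]? = some u := by
  obtain ⟨e', m, hcase⟩ := (D.adj_iff u v).mp hadj
  rcases hcase with ⟨hu, hv'⟩ | ⟨hv', hu⟩
  · obtain ⟨rfl, hm⟩ := pos_unique D e hk1 hk2 hv e' (m + 1) hv'
    left; rw [show k - 1 = m from by omega]; exact hu
  · obtain ⟨rfl, hm⟩ := pos_unique D e hk1 hk2 hv e' m hv'
    right; rw [show k + 1 = m + 1 from by omega]; exact hu

lemma mem_position {v : β} (hb : ¬ ∃ a, D.φ a = v) :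
    ∃ e k, 1 ≤ k ∧ k + 1 < (D.path e).length ∧ (D.path e)[k]? = some v := by
  rcases D.cover v with h | ⟨e, hv⟩
  · exact absurd h hb
  obtain ⟨m, hm⟩ := List.mem_iff_getElem?.mp hv
  have hml := some_lt hm
  have h0 : m ≠ 0 := fun h => hb (end_branch D e hm (Or.inl h))
  have hL : m ≠ (D.path e).length - 1 := fun h => hb (end_branch D e hm (Or.inr h))
  exact ⟨e, m, by omega, by omega, hm⟩

/-- position `m` on path `e` is defined and its vertex is in `C` -/
def MemC (e : ε) (m : ℕ) : Prop := ∃ v, (D.path e)[m]? = some v ∧ v ∈ C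

/-- position `m` on path `e` is defined and its vertex is not in `C` -/
def NotC (e : ε) (m : ℕ) : Prop := ∃ v, (D.path e)[m]? = some v ∧ v ∉ C

/-- a nonempty run of `C` lying strictly inside a path, flanked by non-`C` vertices -/
def IntRun : Prop := ∃ e a b, a + 2 ≤ b ∧ NotC D C e a ∧ NotC D C e b ∧
  ∀ j, a < j → j < b → MemC D C e j

/-- an internal position not in `C` with a `C`-neighbor on the path -/
def BadPos (e : ε) (k : ℕ) : Prop :=
  1 ≤ k ∧ k + 1 < (D.path e).length ∧ ¬ MemC D C e k ∧
    (MemC D C e (k - 1) ∨ MemC D C e (k + 1))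

lemma notC_not_memC {e m} (h : NotC D C e m) : ¬ MemC D C e m := by
  rintro ⟨v, hv, hvC⟩
  obtain ⟨w, hw, hwn⟩ := h
  rw [hv] at hw
  exact hwn (Option.some_inj.mp hw ▸ hvC)

lemma notC_of {e m} (hm : m < (D.path e).length) (h : ¬ MemC D C e m) : NotC D C e m :=
  ⟨(D.path e)[m], List.getElem?_eq_getElem hm,
    fun hc => h ⟨(D.path e)[m], List.getElem?_eq_getElem hm, hc⟩⟩

lemma run_of_pattern (h : ¬ IntRun D C) :
    ∀ e a j b, a < j → j < b → NotC D C e a → MemC D C e j → NotC D C e b → False := by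
  classical
  intro e a j b haj hjb hna hmj hnb
  have hblen : b < (D.path e).length := some_lt hnb.choose_spec.1
  set P : ℕ → Prop := fun m => ¬ MemC D C e m with hP
  have hPa : P a := notC_not_memC D C hna
  set a' := Nat.findGreatest P (j - 1) with ha'
  have hPa' : P a' := Nat.findGreatest_spec (m := a) (by omega) hPa
  have ha'j : a' ≤ j - 1 := Nat.findGreatest_le _
  have hex : ∃ m, j < m ∧ ¬ MemC D C e m := ⟨b, hjb, notC_not_memC D C hnb⟩
  set b' := Nat.find hex with hb'
  obtain ⟨hjb', hPb'⟩ := Nat.find_spec hex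
  have hb'b : b' ≤ b := Nat.find_le ⟨hjb, notC_not_memC D C hnb⟩
  apply h
  refine ⟨e, a', b', by omega, notC_of D C (by omega) hPa', notC_of D C (by omega) hPb', ?_⟩
  intro m hm1 hm2
  by_cases hmj' : m ≤ j - 1
  · have := Nat.findGreatest_is_greatest (P := P) hm1 hmj'
    rw [hP] at this
    exact not_not.mp this
  · by_cases hmje : m = j
    · exact hmje ▸ hmj
    · have hjm : j < m := by omega
      have := Nat.find_min hex hm2
      push_neg at this
      exact this hjm

lemma badpos_three (h : ¬ IntRun D C) (e : ε) :
    ∀ k1 k2 k3, k1 < k2 → k2 < k3 → BadPos D C e k1 → BadPos D C e k2 → BadPos D C e k3 →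
      False := by
  intro k1 k2 k3 h12 h23 hb1 hb2 hb3
  obtain ⟨hk1a, hk1b, hk1n, -⟩ := hb1
  obtain ⟨hk2a, hk2b, hk2n, hk2nb⟩ := hb2
  obtain ⟨hk3a, hk3b, hk3n, -⟩ := hb3
  have hn1 : NotC D C e k1 := notC_of D C (by omega) hk1n
  have hn3 : NotC D C e k3 := notC_of D C (by omega) hk3n
  rcases hk2nb with hmem | hmem
  · rcases (by omega : k1 < k2 - 1 ∨ k1 = k2 - 1) with h1 | h1
    · exact run_of_pattern D C h e k1 (k2 - 1) k3 h1 (by omega) hn1 hmem hn3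
    · exact hk1n (h1 ▸ hmem)
  · rcases (by omega : k2 + 1 < k3 ∨ k2 + 1 = k3) with h1 | h1
    · exact run_of_pattern D C h e k1 (k2 + 1) k3 (by omega) h1 hn1 hmem hn3
    · exact hk3n (h1 ▸ hmem)

end StarProof

/-- For every fixed finite multigraph `H` there exists `n ≥ 3` such that the star
`K_{1,n}` is not a proper `H`-graph. -/
theorem exists_star_not_properHGraph {α ε : Type} [Fintype α] [Fintype ε]
    (H : Multigraph α ε) :
    ∃ n : ℕ, 3 ≤ n ∧ ¬ IsProperHGraph H (starG n) := by
  classical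
  refine ⟨Fintype.card α + 2 * Fintype.card ε + 3, by omega, ?_⟩
  set n := Fintype.card α + 2 * Fintype.card ε + 3 with hn
  rintro ⟨N, H', D, S, hS, hadj, hncont⟩
  have hsuccne : ∀ i : Fin n, (0 : Fin (n + 1)) ≠ i.succ :=
    fun i => (Fin.succ_ne_zero i).symm
  have hadjC : ∀ i : Fin n, (S 0 ∩ S i.succ).Nonempty := by
    intro i
    refine (hadj 0 i.succ (hsuccne i)).mp ?_
    show (SimpleGraph.fromRel _).Adj _ _
    exact (SimpleGraph.fromRel_adj _ _ _).mpr ⟨hsuccne i, Or.inl ⟨rfl, Fin.succ_ne_zero i⟩⟩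
  have hdisj : ∀ i j : Fin n, i ≠ j → S i.succ ∩ S j.succ = ∅ := by
    intro i j hne
    have hne' : (i.succ : Fin (n + 1)) ≠ j.succ := fun h => hne (Fin.succ_injective n h)
    have hnadj : ¬ (starG n).Adj i.succ j.succ := by
      intro h
      rcases (SimpleGraph.fromRel_adj _ _ _).mp h with ⟨-, ⟨h1, -⟩ | ⟨h1, -⟩⟩
      exacts [Fin.succ_ne_zero i h1, Fin.succ_ne_zero j h1]
    rw [← Set.not_nonempty_iff_eq_empty]
    exact fun h2 => hnadj ((hadj _ _ hne').mpr h2)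
  have hnsub : ∀ i : Fin n, ¬ S i.succ ⊆ S 0 := by
    intro i hsub
    have heq : S i.succ = S 0 := by
      by_contra hne
      exact hncont i.succ 0 (Set.ssubset_iff_subset_ne.mpr ⟨hsub, hne⟩)
    obtain ⟨j, hj⟩ := Fintype.exists_ne_of_one_lt_card
      (by rw [Fintype.card_fin]; omega) i
    obtain ⟨p, hp0, hpj⟩ := hadjC j
    rw [← heq] at hp0
    exact Set.eq_empty_iff_forall_notMem.mp (hdisj j i hj) p ⟨hpj, hp0⟩
  have hcross : ∀ i : Fin n, ∃ x y, x ∈ S 0 ∧ y ∉ S 0 ∧ y ∈ S i.succ ∧ H'.Adj x y := by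
    intro i
    obtain ⟨p, hp0, hpi⟩ := hadjC i
    obtain ⟨q, hqi, hq0⟩ := Set.not_subset.mp (hnsub i)
    have hconn := (hS i.succ).2 ⟨p, hpi⟩
    have hreach := hconn.preconnected ⟨p, hpi⟩ ⟨q, hqi⟩
    obtain ⟨x, y, hx, hy, hxy⟩ :=
      exists_crossing (C := {z : ↥(S i.succ) | z.val ∈ S 0}) hreach hq0 hp0
    exact ⟨x.val, y.val, hx, hy, y.2, hxy⟩
  choose x y hx hy hyS hxyadj using hcross
  have hyinj : Function.Injective y := by
    intro i j hij
    by_contra hne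
    exact Set.eq_empty_iff_forall_notMem.mp (hdisj i j hne) (y i) ⟨hyS i, hij ▸ hyS j⟩
  by_cases hIR : IntRun D (S 0)
  · -- degenerate case: C is an interior run of a single path
    obtain ⟨e, a, b, hab, hna, hnb, hrun⟩ := hIR
    obtain ⟨va, hva, hvaC⟩ := hna
    obtain ⟨vb, hvb, hvbC⟩ := hnb
    have hblen : b < (D.path e).length := some_lt hvb
    obtain ⟨v1, hv1p, hv1C⟩ := hrun (a + 1) (by omega) (by omega)
    have hconnC := (hS 0).2 ⟨v1, hv1C⟩
    have hclosed : ∀ (u v : ↥(S 0)), (H'.induce (S 0)).Adj u v →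
        (∃ j, a < j ∧ j < b ∧ (D.path e)[j]? = some u.val) →
        (∃ j, a < j ∧ j < b ∧ (D.path e)[j]? = some v.val) := by
      intro u v huv hu
      obtain ⟨j, hja, hjb, hjv⟩ := hu
      have hadj' : H'.Adj v.val u.val := huv.symm
      rcases neighbors_of_internal D e (by omega) (by omega) hjv hadj' with h | h
      · rcases Nat.lt_or_ge a (j - 1) with hc | hc
        · exact ⟨j - 1, hc, by omega, h⟩
        · have hj1 : j - 1 = a := by omega
          rw [hj1] at h
          have : va = v.val := Option.some_inj.mp (hva.symm.trans h)
          exact absurd v.2 (this ▸ hvaC)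
      · rcases Nat.lt_or_ge (j + 1) b with hc | hc
        · exact ⟨j + 1, by omega, hc, h⟩
        · have hj1 : j + 1 = b := by omega
          rw [hj1] at h
          have : vb = v.val := Option.some_inj.mp (hvb.symm.trans h)
          exact absurd v.2 (this ▸ hvbC)
    have hCI : ∀ c ∈ S 0, ∃ j, a < j ∧ j < b ∧ (D.path e)[j]? = some c := by
      intro c hc
      exact reach_closed (G := H'.induce (S 0))
        (P := fun z => ∃ j, a < j ∧ j < b ∧ (D.path e)[j]? = some z.val) hclosed
        (hconnC.preconnected ⟨v1, hv1C⟩ ⟨c, hc⟩) ⟨a + 1, by omega, by omega, hv1p⟩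
    have hyab : ∀ i : Fin n, y i = va ∨ y i = vb := by
      intro i
      obtain ⟨j, hja, hjb, hjv⟩ := hCI (x i) (hx i)
      rcases neighbors_of_internal D e (by omega) (by omega) hjv (hxyadj i).symm with h | h
      · rcases Nat.lt_or_ge a (j - 1) with hc | hc
        · obtain ⟨w, hw, hwC⟩ := hrun (j - 1) hc (by omega)
          have : w = y i := Option.some_inj.mp (hw.symm.trans h)
          exact absurd (this ▸ hwC) (hy i)
        · have hj1 : j - 1 = a := by omega
          rw [hj1] at h
          exact Or.inl (Option.some_inj.mp (h.symm.trans hva))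
      · rcases Nat.lt_or_ge (j + 1) b with hc | hc
        · obtain ⟨w, hw, hwC⟩ := hrun (j + 1) (by omega) hc
          have : w = y i := Option.some_inj.mp (hw.symm.trans h)
          exact absurd (this ▸ hwC) (hy i)
        · have hj1 : j + 1 = b := by omega
          rw [hj1] at h
          exact Or.inr (Option.some_inj.mp (h.symm.trans hvb))
    have hn3 : 3 ≤ n := by omega
    set i0 : Fin n := ⟨0, by omega⟩ with hi0
    set i1 : Fin n := ⟨1, by omega⟩ with hi1
    set i2 : Fin n := ⟨2, by omega⟩ with hi2
    have ne01 : i0 ≠ i1 := Fin.ne_of_val_ne (by norm_num)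
    have ne02 : i0 ≠ i2 := Fin.ne_of_val_ne (by norm_num)
    have ne12 : i1 ≠ i2 := Fin.ne_of_val_ne (by norm_num)
    rcases hyab i0 with h0 | h0 <;> rcases hyab i1 with h1 | h1 <;>
      rcases hyab i2 with h2 | h2
    exacts [ne01 (hyinj (h0.trans h1.symm)), ne01 (hyinj (h0.trans h1.symm)),
      ne02 (hyinj (h0.trans h2.symm)), ne12 (hyinj (h1.trans h2.symm)),
      ne12 (hyinj (h1.trans h2.symm)), ne02 (hyinj (h0.trans h2.symm)),
      ne01 (hyinj (h0.trans h1.symm)), ne01 (hyinj (h0.trans h1.symm))]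
  · -- counting case
    have hclass : ∀ i : Fin n, (∃ a, D.φ a = y i) ∨
        ∃ p : ε × ℕ, BadPos D (S 0) p.1 p.2 ∧ (D.path p.1)[p.2]? = some (y i) := by
      intro i
      by_cases hb : ∃ a, D.φ a = y i
      · exact Or.inl hb
      · obtain ⟨e, k, hk1, hk2, hkv⟩ := mem_position D hb
        refine Or.inr ⟨(e, k), ⟨hk1, hk2, ?_, ?_⟩, hkv⟩
        · rintro ⟨w, hw, hwC⟩
          have : w = y i := Option.some_inj.mp (hw.symm.trans hkv)
          exact (hy i) (this ▸ hwC)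
        · rcases neighbors_of_internal D e hk1 hk2 hkv (hxyadj i) with h | h
          · exact Or.inl ⟨x i, h, hx i⟩
          · exact Or.inr ⟨x i, h, hx i⟩
    set F : Fin n → α ⊕ (ε × ℕ) := fun i =>
      if h : ∃ a, D.φ a = y i then Sum.inl h.choose
      else Sum.inr ((hclass i).resolve_left h).choose with hF
    have hFinj : Function.Injective F := by
      intro i j hij
      by_cases hi : ∃ a, D.φ a = y i <;> by_cases hj : ∃ a, D.φ a = y j
      · simp only [hF, dif_pos hi, dif_pos hj, Sum.inl.injEq] at hij
        have hci := hi.choose_spec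
        have hcj := hj.choose_spec
        rw [← hij] at hcj
        exact hyinj (hci.symm.trans hcj)
      · simp only [hF, dif_pos hi, dif_neg hj] at hij
        exact absurd hij (by simp)
      · simp only [hF, dif_neg hi, dif_pos hj] at hij
        exact absurd hij (by simp)
      · simp only [hF, dif_neg hi, dif_neg hj, Sum.inr.injEq] at hij
        have si := ((hclass i).resolve_left hi).choose_spec
        have sj := ((hclass j).resolve_left hj).choose_spec
        rw [hij] at si
        exact hyinj (Option.some_inj.mp (si.2.symm.trans sj.2))
    set A := Finset.univ.filter (fun i : Fin n => ∃ a, D.φ a = y i) with hA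
    set B := Finset.univ.filter (fun i : Fin n => ¬ ∃ a, D.φ a = y i) with hB
    have hABcard : A.card + B.card = n := by
      rw [hA, hB, Finset.card_filter_add_card_filter_not, Finset.card_univ,
        Fintype.card_fin]
    have hAcard : A.card ≤ Fintype.card α := by
      have hmaps : ∀ i ∈ A, F i ∈ (Finset.univ : Finset α).image Sum.inl := by
        intro i hi
        have hi' : ∃ a, D.φ a = y i := (Finset.mem_filter.mp hi).2
        rw [Finset.mem_image]
        exact ⟨hi'.choose, Finset.mem_univ _, by simp only [hF, dif_pos hi']⟩
      calc A.card ≤ ((Finset.univ : Finset α).image Sum.inl).card :=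
            Finset.card_le_card_of_injOn F hmaps (fun i _ j _ h => hFinj h)
        _ ≤ (Finset.univ : Finset α).card := Finset.card_image_le
        _ = Fintype.card α := Finset.card_univ
    set Eof : Fin n → Option ε := fun i =>
      if h : ∃ a, D.φ a = y i then none
      else some ((hclass i).resolve_left h).choose.1 with hEof
    have hBcard : B.card ≤ 2 * (Fintype.card ε + 1) := by
      have hfib : ∀ o ∈ B.image Eof, (B.filter (fun i => Eof i = o)).card ≤ 2 := by
        intro o ho
        by_contra hgt
        push_neg at hgt
        obtain ⟨j1, j2, j3, hj1, hj2, hj3, h12, h13, h23⟩ := Finset.two_lt_card_iff.mp hgt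
        have hget : ∀ jj : Fin n, jj ∈ B.filter (fun i => Eof i = o) →
            ∃ h : ¬ ∃ a, D.φ a = y jj, Eof jj = o := by
          intro jj hjj
          have h1 := Finset.mem_filter.mp hjj
          exact ⟨(Finset.mem_filter.mp h1.1).2, h1.2⟩
        obtain ⟨hb1, he1⟩ := hget j1 hj1
        obtain ⟨hb2, he2⟩ := hget j2 hj2
        obtain ⟨hb3, he3⟩ := hget j3 hj3
        have s1 := ((hclass j1).resolve_left hb1).choose_spec
        have s2 := ((hclass j2).resolve_left hb2).choose_spec
        have s3 := ((hclass j3).resolve_left hb3).choose_spec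
        have hE1 : Eof j1 = some ((hclass j1).resolve_left hb1).choose.1 := by
          simp only [hEof, dif_neg hb1]
        have hE2 : Eof j2 = some ((hclass j2).resolve_left hb2).choose.1 := by
          simp only [hEof, dif_neg hb2]
        have hE3 : Eof j3 = some ((hclass j3).resolve_left hb3).choose.1 := by
          simp only [hEof, dif_neg hb3]
        have he21 : ((hclass j2).resolve_left hb2).choose.1 =
            ((hclass j1).resolve_left hb1).choose.1 :=
          Option.some_inj.mp (hE2.symm.trans (he2.trans (he1.symm.trans hE1)))
        have he31 : ((hclass j3).resolve_left hb3).choose.1 =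
            ((hclass j1).resolve_left hb1).choose.1 :=
          Option.some_inj.mp (hE3.symm.trans (he3.trans (he1.symm.trans hE1)))
        have hkne : ∀ (ja jb : Fin n) (hba : ¬ ∃ a, D.φ a = y ja)
            (hbb : ¬ ∃ a, D.φ a = y jb), ja ≠ jb →
            ((hclass ja).resolve_left hba).choose.1 = ((hclass jb).resolve_left hbb).choose.1 →
            ((hclass ja).resolve_left hba).choose.2 ≠ ((hclass jb).resolve_left hbb).choose.2 := by
          intro ja jb hba hbb hne h1 h2
          have hq : ((hclass ja).resolve_left hba).choose =
              ((hclass jb).resolve_left hbb).choose := Prod.ext_iff.mpr ⟨h1, h2⟩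
          have sa := ((hclass ja).resolve_left hba).choose_spec
          have sb := ((hclass jb).resolve_left hbb).choose_spec
          rw [hq] at sa
          exact hne (hyinj (Option.some_inj.mp (sa.2.symm.trans sb.2)))
        have p2 : BadPos D (S 0) ((hclass j1).resolve_left hb1).choose.1
            ((hclass j2).resolve_left hb2).choose.2 := he21 ▸ s2.1
        have p3 : BadPos D (S 0) ((hclass j1).resolve_left hb1).choose.1
            ((hclass j3).resolve_left hb3).choose.2 := he31 ▸ s3.1
        obtain ⟨ka, kb, kc, hkab, hkbc, pa, pb, pc⟩ :=
          three_sorted (hkne j1 j2 hb1 hb2 h12 he21.symm)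
            (hkne j1 j3 hb1 hb3 h13 he31.symm)
            (hkne j2 j3 hb2 hb3 h23 (he21.trans he31.symm))
            (fun k => BadPos D (S 0) ((hclass j1).resolve_left hb1).choose.1 k)
            s1.1 p2 p3
        exact badpos_three D (S 0) hIR _ ka kb kc hkab hkbc pa pb pc
      calc B.card ≤ 2 * (B.image Eof).card := Finset.card_le_mul_card_image B 2 hfib
        _ ≤ 2 * Fintype.card (Option ε) :=
            Nat.mul_le_mul_left 2 (Finset.card_le_univ _)
        _ = 2 * (Fintype.card ε + 1) := by rw [Fintype.card_option]
    omega
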